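/- For α ∈ (0,2), let Q_n = Σ_{j=0}^{n−1} A_j j^2 where A_j are the sub-travelling areas of the slicer map S_α. Then lim_{n→∞} Q_n/n^γ equals +∞ if 0 ≤ γ < 2−α, equals α/(2−α) if γ = 2−α, and equals 0 if 2−α < γ ≤ 2. -/

import Mathlib

open Filter Real Set

noncomputable def ella (α : ℝ) (m : ℤ) : ℝ :=
  (((|m| : ℤ) : ℝ) + (2:ℝ) ^ (1/α)) ^ (-α)

/-- The sub-travelling areas of the slicer map `S_α` at time `n` (closed form):
`A_0 = 2(ℓ_0 - ℓ_1)` for even `n`, `A_j = ℓ_{|j|-1} - ℓ_{|j|+1}` for `0 < |j| < n`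
with `j ≡ n (mod 2)`, and `A_j = 0` otherwise. -/
noncomputable def subA (α : ℝ) (n : ℕ) (j : ℤ) : ℝ :=
  if j = 0 ∧ Even n then 2 * (ella α 0 - ella α 1)
  else if 0 < |j| ∧ |j| < (n:ℤ) ∧ j % 2 = (n:ℤ) % 2 then
    ella α (|j| - 1) - ella α (|j| + 1)
  else 0


lemma tendsto_linear_ratio (a b a' b' : ℝ) (ha' : a' ≠ 0) :
    Tendsto (fun k : ℕ => (a*(k:ℝ)+b)/(a'*(k:ℝ)+b')) atTop (nhds (a/a')) := by
  have h1 : Tendsto (fun k : ℕ => a + b*(1/(k:ℝ))) atTop (nhds a) := by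
    simpa using (tendsto_const_nhds (x := a)).add
      ((tendsto_const_nhds (x := b)).mul tendsto_one_div_atTop_nhds_zero_nat)
  have h2 : Tendsto (fun k : ℕ => a' + b'*(1/(k:ℝ))) atTop (nhds a') := by
    simpa using (tendsto_const_nhds (x := a')).add
      ((tendsto_const_nhds (x := b')).mul tendsto_one_div_atTop_nhds_zero_nat)
  refine (h1.div h2 ha').congr' ?_
  filter_upwards [eventually_ge_atTop 1] with k hk
  have hk0 : (k:ℝ) ≠ 0 := by positivity
  show (a + b*(1/(k:ℝ)))/(a' + b'*(1/(k:ℝ))) = _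
  rw [show a*(k:ℝ)+b = (a + b*(1/(k:ℝ)))*(k:ℝ) by field_simp,
    show a'*(k:ℝ)+b' = (a' + b'*(1/(k:ℝ)))*(k:ℝ) by field_simp,
    mul_div_mul_right _ _ hk0]

lemma tendsto_of_even_odd {f : ℕ → ℝ} {l : Filter ℝ}
    (hE : Tendsto (fun m => f (2*m)) atTop l)
    (hO : Tendsto (fun m => f (2*m+1)) atTop l) : Tendsto f atTop l := by
  rw [tendsto_def] at *
  intro s hs
  obtain ⟨N1, h1⟩ := mem_atTop_sets.1 (hE s hs)
  obtain ⟨N2, h2⟩ := mem_atTop_sets.1 (hO s hs)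
  rw [mem_atTop_sets]
  refine ⟨2*N1 + 2*N2 + 1, fun n hn => ?_⟩
  rcases Nat.even_or_odd n with ⟨m, hm⟩ | ⟨m, hm⟩
  · have : m ≥ N1 := by omega
    have := h1 m this
    simpa [show 2*m = n by omega] using this
  · have : m ≥ N2 := by omega
    have := h2 m this
    simpa [show 2*m+1 = n by omega] using this

-- integral of (2x+d)^q over [0,N]
lemma integral_two_mul_add (q d : ℝ) (hq : -1 < q) (hd : 0 < d) (N : ℕ) :
    ∫ x in (0:ℝ)..(N:ℝ), (2*x+d)^q = ((2*(N:ℝ)+d)^(q+1) - d^(q+1))/(2*(q+1)) := by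
  have h := intervalIntegral.integral_comp_mul_add (a := (0:ℝ)) (b := (N:ℝ))
    (fun u => u ^ q) (two_ne_zero) d
  simp only [mul_zero, zero_add] at h
  rw [h, integral_rpow (Or.inl hq)]
  rw [smul_eq_mul]
  have h1 : q + 1 ≠ 0 := by linarith
  field_simp

lemma sum_shift (N : ℕ) (g : ℕ → ℝ) :
    ∑ i ∈ Finset.range N, g (i+1) = (∑ i ∈ Finset.range N, g i) + g N - g 0 := by
  have h1 := Finset.sum_range_succ' g N
  have h2 := Finset.sum_range_succ g N
  linarith

lemma sum_bounds (q d : ℝ) (hq1 : q ≤ 1) (hd : 1 ≤ d) (N : ℕ) :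
    |(∑ i ∈ Finset.range N, (2*(i:ℝ)+d)^q) - ∫ x in (0:ℝ)..(N:ℝ), (2*x+d)^q|
      ≤ d^q + (2*(N:ℝ)+d)^q := by
  have hd0 : (0:ℝ) < d := lt_of_lt_of_le one_pos hd
  have hpos : ∀ x : ℝ, 0 ≤ x → (0:ℝ) < 2*x+d := fun x hx => by linarith
  rcases le_or_gt 0 q with hq0 | hq0
  · -- monotone case
    have hmono : MonotoneOn (fun x : ℝ => (2*x+d)^q) (Icc (0:ℝ) (0 + N)) := by
      intro x hx y hy hxy
      exact rpow_le_rpow (by have := hpos x hx.1; linarith) (by linarith) hq0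
    have h1 := hmono.sum_le_integral
    have h2 := hmono.integral_le_sum
    simp only [zero_add] at h1 h2
    push_cast at h1 h2
    -- h1 : ∑ i ∈ range N, (2*i+d)^q ≤ ∫ ; h2 : ∫ ≤ ∑ i ∈ range N, (2*(i+1)+d)^q
    have hshift : (∑ i ∈ Finset.range N, (2*((i:ℝ)+1)+d)^q)
        ≤ (∑ i ∈ Finset.range N, (2*(i:ℝ)+d)^q) + (2*(N:ℝ)+d)^q - d^q := by
      have := sum_shift N (fun i => (2*(i:ℝ)+d)^q)
      push_cast at this
      simp only [mul_zero, zero_add] at this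
      linarith
    rw [abs_le]
    constructor
    · nlinarith [h2, hshift, rpow_nonneg hd0.le q, rpow_nonneg (hpos N (Nat.cast_nonneg N)).le q]
    · nlinarith [h1, rpow_nonneg hd0.le q, rpow_nonneg (hpos N (Nat.cast_nonneg N)).le q]
  · -- antitone case
    have hanti : AntitoneOn (fun x : ℝ => (2*x+d)^q) (Icc (0:ℝ) (0 + N)) := by
      intro x hx y hy hxy
      exact rpow_le_rpow_of_nonpos (hpos x hx.1) (by linarith) hq0.le
    have h1 := hanti.integral_le_sum
    have h2 := hanti.sum_le_integral
    simp only [zero_add] at h1 h2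
    push_cast at h1 h2
    have hshift : (∑ i ∈ Finset.range N, (2*(i:ℝ)+d)^q)
        ≤ (∑ i ∈ Finset.range N, (2*((i:ℝ)+1)+d)^q) + d^q := by
      have := sum_shift N (fun i => (2*(i:ℝ)+d)^q)
      push_cast at this
      simp only [mul_zero, zero_add] at this
      have hN : (0:ℝ) ≤ (2*(N:ℝ)+d)^q := rpow_nonneg (hpos N (Nat.cast_nonneg N)).le q
      linarith
    rw [abs_le]
    constructor
    · nlinarith [h1, rpow_nonneg hd0.le q, rpow_nonneg (hpos N (Nat.cast_nonneg N)).le q]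
    · nlinarith [h2, hshift, rpow_nonneg hd0.le q, rpow_nonneg (hpos N (Nat.cast_nonneg N)).le q]
lemma sum_rpow_tendsto (q d : ℝ) (hq : -1 < q) (hq1 : q ≤ 1) (hd : 1 ≤ d) :
    Tendsto (fun N : ℕ => (∑ i ∈ Finset.range N, (2*(i:ℝ)+d)^q) / (N:ℝ)^(q+1))
      atTop (nhds ((2:ℝ)^q/(q+1))) := by
  have hq1' : (0:ℝ) < q + 1 := by linarith
  have hd0 : (0:ℝ) < d := lt_of_lt_of_le one_pos hd
  have hNat : Tendsto (fun N : ℕ => (N:ℝ)) atTop atTop := tendsto_natCast_atTop_atTop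
  have hpow : Tendsto (fun N : ℕ => (N:ℝ)^(q+1)) atTop atTop :=
    (tendsto_rpow_atTop hq1').comp hNat
  have hr : Tendsto (fun N : ℕ => (2*(N:ℝ)+d)/(N:ℝ)) atTop (nhds 2) := by
    have := tendsto_linear_ratio 2 d 1 0 one_ne_zero
    simpa using this
  have hA : Tendsto (fun N : ℕ => (2*(N:ℝ)+d)^(q+1)/(N:ℝ)^(q+1)) atTop (nhds ((2:ℝ)^(q+1))) := by
    have := hr.rpow_const (p := q+1) (Or.inl two_ne_zero)
    refine this.congr fun N => ?_
    exact div_rpow (by positivity) (Nat.cast_nonneg N) _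
  have hB : Tendsto (fun N : ℕ => d^(q+1)/(N:ℝ)^(q+1)) atTop (nhds 0) :=
    tendsto_const_nhds.div_atTop hpow
  have hI : Tendsto (fun N : ℕ => ((2*(N:ℝ)+d)^(q+1) - d^(q+1))/(2*(q+1)) / (N:ℝ)^(q+1))
      atTop (nhds ((2:ℝ)^q/(q+1))) := by
    have h := ((hA.sub hB).div_const (2*(q+1)))
    have heq : ∀ N : ℕ, ((2*(N:ℝ)+d)^(q+1) - d^(q+1))/(2*(q+1)) / (N:ℝ)^(q+1)
        = ((2*(N:ℝ)+d)^(q+1)/(N:ℝ)^(q+1) - d^(q+1)/(N:ℝ)^(q+1))/(2*(q+1)) := by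
      intro N; rw [div_right_comm, sub_div]
    rw [show (2:ℝ)^q/(q+1) = ((2:ℝ)^(q+1) - 0)/(2*(q+1)) by
      rw [sub_zero, show (2:ℝ)^(q+1) = 2*2^q by rw [rpow_add two_pos, rpow_one]; ring,
        mul_div_mul_left _ _ (two_ne_zero)]]
    exact h.congr fun N => (heq N).symm
  have herr : Tendsto (fun N : ℕ => (d^q + (2*(N:ℝ)+d)^q)/(N:ℝ)^(q+1)) atTop (nhds 0) := by
    have h1 : Tendsto (fun N : ℕ => d^q/(N:ℝ)^(q+1)) atTop (nhds 0) :=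
      tendsto_const_nhds.div_atTop hpow
    have h2 : Tendsto (fun N : ℕ => (2*(N:ℝ)+d)^q/(N:ℝ)^(q+1)) atTop (nhds 0) := by
      have hm : Tendsto (fun N : ℕ => ((2*(N:ℝ)+d)/(N:ℝ))^q * (1/(N:ℝ))) atTop
          (nhds ((2:ℝ)^q * 0)) :=
        (hr.rpow_const (Or.inl two_ne_zero)).mul tendsto_one_div_atTop_nhds_zero_nat
      rw [mul_zero] at hm
      refine hm.congr' ?_
      filter_upwards [eventually_ge_atTop 1] with N hN
      have hN0 : (N:ℝ) ≠ 0 := by positivity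
      rw [div_rpow (by positivity) (Nat.cast_nonneg N), rpow_add_one hN0]
      field_simp
    have := h1.add h2
    rw [add_zero] at this
    exact this.congr fun N => (add_div _ _ _).symm
  have hlow := hI.sub herr
  have hup := hI.add herr
  rw [sub_zero] at hlow
  rw [add_zero] at hup
  refine tendsto_of_tendsto_of_tendsto_of_le_of_le' hlow hup ?_ ?_
  · filter_upwards [eventually_ge_atTop 1] with N hN
    have hZ : (0:ℝ) < (N:ℝ)^(q+1) := rpow_pos_of_pos (by positivity) _
    have hb := abs_le.1 (sum_bounds q d hq1 hd N)
    rw [integral_two_mul_add q d hq hd0 N] at hb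
    rw [← sub_div]
    exact (div_le_div_iff_of_pos_right hZ).2 (by linarith [hb.1])
  · filter_upwards [eventually_ge_atTop 1] with N hN
    have hZ : (0:ℝ) < (N:ℝ)^(q+1) := rpow_pos_of_pos (by positivity) _
    have hb := abs_le.1 (sum_bounds q d hq1 hd N)
    rw [integral_two_mul_add q d hq hd0 N] at hb
    rw [← add_div]
    exact (div_le_div_iff_of_pos_right hZ).2 (by linarith [hb.2])

lemma small_tendsto (α d : ℝ) (hα : α ∈ Set.Ioo (0:ℝ) 2) (hd : 1 ≤ d) :
    Tendsto (fun k : ℕ => (∑ i ∈ Finset.range k, (2*(i:ℝ)+d)^(-α)) / (k:ℝ)^(2-α))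
      atTop (nhds 0) := by
  obtain ⟨hα0, hα2⟩ := hα
  have hS := sum_rpow_tendsto (-(α/2)) d (by linarith) (by linarith) hd
  have h0 : Tendsto (fun k : ℕ => (k:ℝ)^(α/2-1)) atTop (nhds 0) := by
    have := (tendsto_rpow_neg_atTop (y := 1-α/2) (by linarith)).comp
      tendsto_natCast_atTop_atTop
    simpa [Function.comp_def, show -(1-α/2) = α/2-1 by ring] using this
  have hprod := hS.mul h0
  rw [mul_zero] at hprod
  refine tendsto_of_tendsto_of_tendsto_of_le_of_le' tendsto_const_nhds hprod ?_ ?_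
  · filter_upwards [eventually_ge_atTop 1] with k hk
    have : (0:ℝ) ≤ (∑ i ∈ Finset.range k, (2*(i:ℝ)+d)^(-α)) := by
      apply Finset.sum_nonneg; intro i _; positivity
    have hZ : (0:ℝ) ≤ (k:ℝ)^(2-α) := rpow_nonneg (Nat.cast_nonneg k) _
    positivity
  · filter_upwards [eventually_ge_atTop 1] with k hk
    have hk0 : (0:ℝ) < (k:ℝ) := by positivity
    have hsum : (∑ i ∈ Finset.range k, (2*(i:ℝ)+d)^(-α))
        ≤ ∑ i ∈ Finset.range k, (2*(i:ℝ)+d)^(-(α/2)) := by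
      apply Finset.sum_le_sum; intro i _
      apply rpow_le_rpow_of_exponent_le (by have : (0:ℝ) ≤ (i:ℝ) := Nat.cast_nonneg i; linarith)
      linarith
    have heq : (∑ i ∈ Finset.range k, (2*(i:ℝ)+d)^(-(α/2))) / (k:ℝ)^(-(α/2)+1) * (k:ℝ)^(α/2-1)
        = (∑ i ∈ Finset.range k, (2*(i:ℝ)+d)^(-(α/2))) / (k:ℝ)^(2-α) := by
      rw [div_mul_eq_mul_div, div_eq_div_iff (rpow_pos_of_pos hk0 _).ne'
        (rpow_pos_of_pos hk0 _).ne', mul_assoc, ← rpow_add hk0,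
        show α/2-1+(2-α) = -(α/2)+1 by ring]
    rw [heq]
    gcongr

lemma Sgen_tendsto (α e : ℝ) (hα : α ∈ Set.Ioo (0:ℝ) 2) (he : 1 ≤ e) :
    Tendsto (fun k : ℕ =>
        (∑ i ∈ Finset.range k, 4*(2*(i:ℝ)+e-(2:ℝ)^(1/α)) * ((2*(i:ℝ)+e)^(-α))) / (k:ℝ)^(2-α))
      atTop (nhds (4*((2:ℝ)^(1-α)/(2-α)))) := by
  obtain ⟨hα0, hα2⟩ := hα
  set c : ℝ := (2:ℝ)^(1/α) with hc
  have hS := sum_rpow_tendsto (1-α) e (by linarith) (by linarith) he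
  rw [show (1-α)+1 = 2-α by ring] at hS
  have hsmall := small_tendsto α e ⟨hα0, hα2⟩ he
  have h := (hS.const_mul 4).sub (hsmall.const_mul (4*c))
  rw [mul_zero, sub_zero] at h
  refine h.congr fun k => ?_
  have hsum : (∑ i ∈ Finset.range k, 4*(2*(i:ℝ)+e-c) * ((2*(i:ℝ)+e)^(-α)))
      = 4*(∑ i ∈ Finset.range k, (2*(i:ℝ)+e)^(1-α))
        - 4*c*(∑ i ∈ Finset.range k, (2*(i:ℝ)+e)^(-α)) := by
    rw [Finset.mul_sum, Finset.mul_sum, ← Finset.sum_sub_distrib]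
    refine Finset.sum_congr rfl fun i _ => ?_
    have hi : (0:ℝ) ≤ (i:ℝ) := Nat.cast_nonneg i
    have hx : (0:ℝ) < 2*(i:ℝ)+e := by linarith
    rw [show (1:ℝ)-α = 1 + -α by ring, rpow_add hx, rpow_one]
    ring
  rw [hsum]
  ring

lemma boundary_tendsto (α a b w : ℝ) (hα : α ∈ Set.Ioo (0:ℝ) 2) (hb : 1 ≤ b) (hw : 0 < w) :
    Tendsto (fun k : ℕ => (2*(k:ℝ)+a)^2 * ((2*(k:ℝ)+b)^(-α)) / (2*(k:ℝ)+w)^(2-α))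
      atTop (nhds 1) := by
  have hr1 : Tendsto (fun k : ℕ => (2*(k:ℝ)+a)/(2*(k:ℝ)+w)) atTop (nhds 1) := by
    have := tendsto_linear_ratio 2 a 2 w two_ne_zero
    norm_num at this; exact this
  have hr2 : Tendsto (fun k : ℕ => (2*(k:ℝ)+b)/(2*(k:ℝ)+w)) atTop (nhds 1) := by
    have := tendsto_linear_ratio 2 b 2 w two_ne_zero
    norm_num at this; exact this
  have h := (hr1.pow 2).mul (hr2.rpow_const (p := -α) (Or.inl one_ne_zero))
  rw [one_pow, one_rpow, mul_one] at h
  refine h.congr' ?_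
  filter_upwards [eventually_ge_atTop (⌈|a|⌉₊ + 1)] with k hk
  have hka : |a| ≤ (k:ℝ) := le_trans (Nat.le_ceil _) (by exact_mod_cast Nat.le_of_succ_le hk)
  have hk1 : (1:ℝ) ≤ (k:ℝ) := by exact_mod_cast Nat.one_le_iff_ne_zero.2 (by omega)
  have ha0 : (0:ℝ) < 2*(k:ℝ)+a := by have := neg_abs_le a; linarith
  have hb0 : (0:ℝ) < 2*(k:ℝ)+b := by have hk0 : (0:ℝ) ≤ (k:ℝ) := Nat.cast_nonneg k; linarith
  have hw0 : (0:ℝ) < 2*(k:ℝ)+w := by have hk0 : (0:ℝ) ≤ (k:ℝ) := Nat.cast_nonneg k; linarith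
  rw [div_pow, div_rpow hb0.le hw0.le, div_mul_div_comm]
  congr 1
  rw [show (2:ℝ)-α = ((2:ℕ):ℝ) + (-α) by push_cast; ring, rpow_add hw0, rpow_natCast]

noncomputable def Qs (α : ℝ) (n : ℕ) : ℝ :=
  ∑ j ∈ Finset.range n, subA α n (j:ℤ) * (j:ℝ)^2

lemma ella_eq (α : ℝ) (j : ℤ) (hj : 0 ≤ j) : ella α j = ((j:ℝ) + (2:ℝ)^(1/α))^(-α) := by
  unfold ella; rw [abs_of_nonneg hj]

lemma Qstep (α : ℝ) (n : ℕ) :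
    Qs α (n+2) = Qs α n + (n:ℝ)^2 * (ella α ((n:ℤ)-1) - ella α ((n:ℤ)+1)) := by
  unfold Qs
  rw [Finset.sum_range_succ, Finset.sum_range_succ]
  have hlast : subA α (n+2) ((n+1:ℕ):ℤ) = 0 := by
    unfold subA
    rw [if_neg, if_neg]
    · rintro ⟨h1, h2, h3⟩
      simp only [Int.abs_natCast] at h1 h2 h3
      omega
    · rintro ⟨h1, h2⟩
      omega
  have hmid : subA α (n+2) ((n:ℕ):ℤ) * (n:ℝ)^2
      = (n:ℝ)^2 * (ella α ((n:ℤ)-1) - ella α ((n:ℤ)+1)) := by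
    rcases Nat.eq_zero_or_pos n with rfl | hn
    · norm_num
    · unfold subA
      rw [if_neg, if_pos]
      · simp only [Int.abs_natCast]
        ring
      · simp only [Int.abs_natCast]
        omega
      · rintro ⟨h1, h2⟩
        omega
  have hcongr : ∀ j ∈ Finset.range n,
      subA α (n+2) ((j:ℕ):ℤ) * (j:ℝ)^2 = subA α n ((j:ℕ):ℤ) * (j:ℝ)^2 := by
    intro j hj
    rw [Finset.mem_range] at hj
    rcases Nat.eq_zero_or_pos j with rfl | hj0
    · simp [subA, Nat.even_add]
    · unfold subA
      have hne : ¬ (((j:ℕ):ℤ) = 0 ∧ Even (n+2)) := by rintro ⟨h, -⟩; omega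
      have hne' : ¬ (((j:ℕ):ℤ) = 0 ∧ Even n) := by rintro ⟨h, -⟩; omega
      rw [if_neg hne, if_neg hne']
      have hiff : (0 < |((j:ℕ):ℤ)| ∧ |((j:ℕ):ℤ)| < ((n+2:ℕ):ℤ) ∧ ((j:ℕ):ℤ) % 2 = ((n+2:ℕ):ℤ) % 2)
          ↔ (0 < |((j:ℕ):ℤ)| ∧ |((j:ℕ):ℤ)| < ((n:ℕ):ℤ) ∧ ((j:ℕ):ℤ) % 2 = ((n:ℕ):ℤ) % 2) := by
        simp only [Int.abs_natCast]
        push_cast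
        omega
      rw [if_congr hiff rfl rfl]
  rw [Finset.sum_congr rfl hcongr, hlast, hmid]
  push_cast
  ring

lemma Qeven (α : ℝ) (k : ℕ) :
    Qs α (2*(k+1)) = (∑ i ∈ Finset.range k,
        4*(2*(i:ℝ)+1) * ((2*(i:ℝ)+1+(2:ℝ)^(1/α))^(-α)))
      - (2*(k:ℝ))^2 * ((2*(k:ℝ)+1+(2:ℝ)^(1/α))^(-α)) := by
  induction k with
  | zero =>
    norm_num [Qs, Finset.sum_range_succ, subA]
  | succ k ih =>
    have hstep := Qstep α (2*(k+1))
    rw [show 2*(k+1)+2 = 2*(k+1+1) by ring] at hstep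
    rw [hstep, ih, Finset.sum_range_succ]
    have e1 : ella α (((2*(k+1):ℕ):ℤ) - 1) = (2*(k:ℝ)+1+(2:ℝ)^(1/α))^(-α) := by
      rw [ella_eq α _ (by omega)]
      congr 2
      push_cast
      ring
    have e2 : ella α (((2*(k+1):ℕ):ℤ) + 1) = (2*((k:ℝ)+1)+1+(2:ℝ)^(1/α))^(-α) := by
      rw [ella_eq α _ (by omega)]
      congr 2
      push_cast
      ring
    rw [e1, e2]
    push_cast
    ring

lemma Qodd (α : ℝ) (k : ℕ) :
    Qs α (2*(k+1)+1) = ((0:ℝ)+(2:ℝ)^(1/α))^(-α)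
      + (∑ i ∈ Finset.range k, 4*(2*(i:ℝ)+2) * ((2*(i:ℝ)+2+(2:ℝ)^(1/α))^(-α)))
      - (2*(k:ℝ)+1)^2 * ((2*(k:ℝ)+2+(2:ℝ)^(1/α))^(-α)) := by
  induction k with
  | zero =>
    have h0 : Qs α 3 = ella α 0 - ella α 2 := by
      norm_num [Qs, Finset.sum_range_succ, subA]
    rw [show 2*(0+1)+1 = 3 by ring, h0, ella_eq α 0 le_rfl, ella_eq α 2 (by omega)]
    norm_num
  | succ k ih =>
    have hstep := Qstep α (2*(k+1)+1)
    rw [show 2*(k+1)+1+2 = 2*(k+1+1)+1 by ring] at hstep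
    rw [hstep, ih, Finset.sum_range_succ]
    have e1 : ella α (((2*(k+1)+1:ℕ):ℤ) - 1) = (2*(k:ℝ)+2+(2:ℝ)^(1/α))^(-α) := by
      rw [ella_eq α _ (by omega)]
      congr 2
      push_cast
      ring
    have e2 : ella α (((2*(k+1)+1:ℕ):ℤ) + 1) = (2*((k:ℝ)+1)+2+(2:ℝ)^(1/α))^(-α) := by
      rw [ella_eq α _ (by omega)]
      congr 2
      push_cast
      ring
    rw [e1, e2]
    push_cast
    ring

section
variable (α : ℝ)

lemma limit_value (hα : α ∈ Set.Ioo (0:ℝ) 2) :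
    4*((2:ℝ)^(1-α)/(2-α))*((1/2:ℝ)^(2-α)) - 1 = α/(2-α) := by
  obtain ⟨h0, h2⟩ := hα
  have h21 : ((1/2:ℝ))^(2-α) = (2:ℝ)^(α-2) := by
    rw [one_div, ← rpow_neg_one (2:ℝ), ← rpow_mul (by norm_num : (0:ℝ) ≤ 2)]
    congr 1
    ring
  rw [h21]
  have : (2:ℝ)^(1-α)/(2-α)*((2:ℝ)^(α-2)) = (2:ℝ)^(-1:ℝ)/(2-α) := by
    rw [div_mul_eq_mul_div, ← rpow_add two_pos]
    norm_num
  rw [mul_assoc, this]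
  rw [show (2:ℝ)^(-1:ℝ) = 1/2 by rw [rpow_neg_one]; norm_num]
  have hne : (2:ℝ) - α ≠ 0 := by linarith
  field_simp
  ring

lemma even_limit (hα : α ∈ Set.Ioo (0:ℝ) 2) :
    Tendsto (fun m : ℕ => Qs α (2*m) / ((2*m:ℕ):ℝ)^(2-α)) atTop (nhds (α/(2-α))) := by
  obtain ⟨h0, h2⟩ := hα
  set c : ℝ := (2:ℝ)^(1/α) with hc
  have hc0 : (0:ℝ) < c := rpow_pos_of_pos two_pos _
  rw [← tendsto_add_atTop_iff_nat 1]
  have hA : Tendsto (fun k : ℕ =>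
      (∑ i ∈ Finset.range k, 4*(2*(i:ℝ)+1) * ((2*(i:ℝ)+1+c)^(-α))) / (k:ℝ)^(2-α))
      atTop (nhds (4*((2:ℝ)^(1-α)/(2-α)))) := by
    have := Sgen_tendsto α (1+c) ⟨h0, h2⟩ (by linarith)
    refine this.congr fun k => ?_
    congr 1
    refine Finset.sum_congr rfl fun i _ => ?_
    rw [show 2*(i:ℝ)+(1+c) = 2*(i:ℝ)+1+c by ring]
    ring
  have hρ : Tendsto (fun k : ℕ => (k:ℝ)^(2-α) / ((2*((k:ℝ)+1)))^(2-α))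
      atTop (nhds (((1:ℝ)/2)^(2-α))) := by
    have hr : Tendsto (fun k : ℕ => (k:ℝ)/(2*((k:ℝ)+1))) atTop (nhds ((1:ℝ)/2)) := by
      have h := tendsto_linear_ratio 1 0 2 2 two_ne_zero
      refine h.congr fun k => ?_
      rw [show (1:ℝ)*(k:ℝ)+0 = (k:ℝ) by ring, show (2:ℝ)*(k:ℝ)+2 = 2*((k:ℝ)+1) by ring]
    have := hr.rpow_const (p := 2-α) (Or.inl (by norm_num))
    refine this.congr fun k => ?_
    rw [div_rpow (Nat.cast_nonneg k) (by positivity)]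
  have hB : Tendsto (fun k : ℕ =>
      (2*(k:ℝ))^2 * ((2*(k:ℝ)+1+c)^(-α)) / ((2*((k:ℝ)+1)))^(2-α)) atTop (nhds 1) := by
    have := boundary_tendsto α 0 (1+c) 2 ⟨h0, h2⟩ (by linarith) two_pos
    refine this.congr fun k => ?_
    rw [show 2*(k:ℝ)+0 = 2*(k:ℝ) by ring, show 2*(k:ℝ)+(1+c) = 2*(k:ℝ)+1+c by ring,
      show 2*(k:ℝ)+2 = 2*((k:ℝ)+1) by ring]
  have h := (hA.mul hρ).sub hB
  rw [limit_value α ⟨h0, h2⟩] at h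
  refine h.congr' ?_
  filter_upwards [eventually_ge_atTop 1] with k hk
  have hk0 : (0:ℝ) < (k:ℝ) := by positivity
  have hkp : ((k:ℝ))^(2-α) ≠ 0 := (rpow_pos_of_pos hk0 _).ne'
  have hD : (0:ℝ) < ((2*((k:ℝ)+1)))^(2-α) := rpow_pos_of_pos (by positivity) _
  rw [Qeven]
  push_cast
  rw [div_mul_div_comm, mul_comm (((k:ℝ))^(2-α)) _, mul_div_mul_right _ _ hkp, ← sub_div]

lemma odd_limit (hα : α ∈ Set.Ioo (0:ℝ) 2) :
    Tendsto (fun m : ℕ => Qs α (2*m+1) / ((2*m+1:ℕ):ℝ)^(2-α)) atTop (nhds (α/(2-α))) := by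
  obtain ⟨h0, h2⟩ := hα
  set c : ℝ := (2:ℝ)^(1/α) with hc
  have hc0 : (0:ℝ) < c := rpow_pos_of_pos two_pos _
  rw [← tendsto_add_atTop_iff_nat 1]
  have hD : Tendsto (fun k : ℕ => ((2*((k:ℝ)+1)+1))^(2-α)) atTop atTop := by
    refine (tendsto_rpow_atTop (by linarith)).comp ?_
    refine tendsto_atTop_add_const_right _ 1 ?_
    refine (tendsto_natCast_atTop_atTop.atTop_add tendsto_const_nhds).const_mul_atTop two_pos
  have hφ : Tendsto (fun k : ℕ => ((0:ℝ)+c)^(-α) / ((2*((k:ℝ)+1)+1))^(2-α))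
      atTop (nhds 0) := tendsto_const_nhds.div_atTop hD
  have hA : Tendsto (fun k : ℕ =>
      (∑ i ∈ Finset.range k, 4*(2*(i:ℝ)+2) * ((2*(i:ℝ)+2+c)^(-α))) / (k:ℝ)^(2-α))
      atTop (nhds (4*((2:ℝ)^(1-α)/(2-α)))) := by
    have := Sgen_tendsto α (2+c) ⟨h0, h2⟩ (by linarith)
    refine this.congr fun k => ?_
    congr 1
    refine Finset.sum_congr rfl fun i _ => ?_
    rw [show 2*(i:ℝ)+(2+c) = 2*(i:ℝ)+2+c by ring]
    ring
  have hρ : Tendsto (fun k : ℕ => (k:ℝ)^(2-α) / ((2*((k:ℝ)+1)+1))^(2-α))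
      atTop (nhds (((1:ℝ)/2)^(2-α))) := by
    have hr : Tendsto (fun k : ℕ => (k:ℝ)/(2*((k:ℝ)+1)+1)) atTop (nhds ((1:ℝ)/2)) := by
      have h := tendsto_linear_ratio 1 0 2 3 two_ne_zero
      refine h.congr fun k => ?_
      rw [show (1:ℝ)*(k:ℝ)+0 = (k:ℝ) by ring, show (2:ℝ)*(k:ℝ)+3 = 2*((k:ℝ)+1)+1 by ring]
    have := hr.rpow_const (p := 2-α) (Or.inl (by norm_num))
    refine this.congr fun k => ?_
    rw [div_rpow (Nat.cast_nonneg k) (by positivity)]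
  have hB : Tendsto (fun k : ℕ =>
      (2*(k:ℝ)+1)^2 * ((2*(k:ℝ)+2+c)^(-α)) / ((2*((k:ℝ)+1)+1))^(2-α)) atTop (nhds 1) := by
    have := boundary_tendsto α 1 (2+c) 3 ⟨h0, h2⟩ (by linarith) (by norm_num)
    refine this.congr fun k => ?_
    rw [show 2*(k:ℝ)+(2+c) = 2*(k:ℝ)+2+c by ring, show 2*(k:ℝ)+3 = 2*((k:ℝ)+1)+1 by ring]
  have h := hφ.add ((hA.mul hρ).sub hB)
  rw [limit_value α ⟨h0, h2⟩, zero_add (α/(2-α))] at h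
  refine h.congr' ?_
  filter_upwards [eventually_ge_atTop 1] with k hk
  have hk0 : (0:ℝ) < (k:ℝ) := by positivity
  have hkp : ((k:ℝ))^(2-α) ≠ 0 := (rpow_pos_of_pos hk0 _).ne'
  rw [Qodd]
  push_cast
  rw [div_mul_div_comm, mul_comm (((k:ℝ))^(2-α)) _, mul_div_mul_right _ _ hkp, ← sub_div,
    ← add_div, ← hc]
  ring

lemma central (hα : α ∈ Set.Ioo (0:ℝ) 2) :
    Tendsto (fun n : ℕ => Qs α n / (n:ℝ)^(2-α)) atTop (nhds (α/(2-α))) :=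
  tendsto_of_even_odd (even_limit α hα) (odd_limit α hα)

end

/-- for `α ∈ (0,2)`, `Q_n = Σ_{j=0}^{n-1} A_j j²` satisfies
`Q_n/n^γ → ∞` for `0 ≤ γ < 2-α`, `→ α/(2-α)` for `γ = 2-α`, `→ 0` for `2-α < γ ≤ 2`. -/
theorem Q_limit (α : ℝ) (hα : α ∈ Set.Ioo (0:ℝ) 2) :
    (∀ γ : ℝ, 0 ≤ γ → γ < 2 - α →
      Tendsto (fun n : ℕ =>
        (∑ j ∈ Finset.range n, subA α n (j:ℤ) * (j:ℝ)^2) / (n:ℝ)^γ) atTop atTop) ∧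
    Tendsto (fun n : ℕ =>
        (∑ j ∈ Finset.range n, subA α n (j:ℤ) * (j:ℝ)^2) / (n:ℝ)^(2-α))
      atTop (nhds (α / (2 - α))) ∧
    (∀ γ : ℝ, 2 - α < γ → γ ≤ 2 →
      Tendsto (fun n : ℕ =>
        (∑ j ∈ Finset.range n, subA α n (j:ℤ) * (j:ℝ)^2) / (n:ℝ)^γ) atTop (nhds 0)) := by
  obtain ⟨h0, h2⟩ := hα
  have hC := central α ⟨h0, h2⟩
  have hQ : ∀ n : ℕ, (∑ j ∈ Finset.range n, subA α n (j:ℤ) * (j:ℝ)^2) = Qs α n :=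
    fun n => rfl
  have key : ∀ γ : ℝ, ∀ᶠ n : ℕ in atTop,
      Qs α n / (n:ℝ)^(2-α) * (n:ℝ)^(2-α-γ) = Qs α n / (n:ℝ)^γ := by
    intro γ
    filter_upwards [eventually_ge_atTop 1] with n hn
    have hn0 : (0:ℝ) < (n:ℝ) := by positivity
    rw [show (n:ℝ)^(2-α-γ) = (n:ℝ)^(2-α)/(n:ℝ)^γ by rw [← rpow_sub hn0], div_mul_div_comm,
      mul_comm ((n:ℝ)^(2-α)) ((n:ℝ)^γ), mul_div_mul_right _ _ (rpow_pos_of_pos hn0 (2-α)).ne']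
  refine ⟨?_, ?_, ?_⟩
  · intro γ hγ0 hγ
    simp only [hQ]
    have hpow : Tendsto (fun n : ℕ => (n:ℝ)^(2-α-γ)) atTop atTop :=
      (tendsto_rpow_atTop (by linarith)).comp tendsto_natCast_atTop_atTop
    have := hC.pos_mul_atTop (div_pos h0 (by linarith)) hpow
    exact this.congr' (key γ)
  · simp only [hQ]; exact hC
  · intro γ hγ hγ2
    simp only [hQ]
    have hz : Tendsto (fun n : ℕ => (n:ℝ)^(2-α-γ)) atTop (nhds 0) := by
      have := (tendsto_rpow_neg_atTop (y := γ-(2-α)) (by linarith)).comp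
        tendsto_natCast_atTop_atTop
      simpa [Function.comp_def, show -(γ-(2-α)) = 2-α-γ by ring] using this
    have h := hC.mul hz
    rw [mul_zero] at h
    exact h.congr' (key γ)
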